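/- The sequence r_p = p - [(p-1)Γ((p-1)/2)/(√2 Γ(p/2))]² converges to 1/2 as p → ∞. -/

import Mathlib

open Filter Real Real.Wallis

noncomputable def qq (n : ℕ) : ℝ :=
  (Real.Gamma (n + 1/2))^2 / (Real.Gamma (n+1))^2

lemma Gamma_half_pos (n : ℕ) : 0 < Real.Gamma ((n:ℝ) + 1/2) :=
  Real.Gamma_pos_of_pos (by positivity)

lemma Gamma_nat_pos (n : ℕ) : 0 < Real.Gamma ((n:ℝ) + 1) :=
  Real.Gamma_pos_of_pos (by positivity)

lemma qq_pos (n : ℕ) : 0 < qq n := by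
  have := Gamma_half_pos n; have := Gamma_nat_pos n
  unfold qq; positivity

lemma qq_zero : qq 0 = π := by
  unfold qq
  norm_num
  rw [Real.Gamma_one_half_eq, Real.sq_sqrt Real.pi_pos.le]

lemma qq_succ (n : ℕ) : qq (n+1) = qq n * ((2*n+1)/(2*n+2))^2 := by
  unfold qq
  have h1 : ((n:ℝ)+1) + 1/2 = ((n:ℝ) + 1/2) + 1 := by ring
  have h2 : Real.Gamma (((n:ℝ)+1) + 1/2) = ((n:ℝ)+1/2) * Real.Gamma ((n:ℝ)+1/2) := by
    rw [h1, Real.Gamma_add_one (by positivity)]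
  have h3 : Real.Gamma (((n:ℝ)+1) + 1) = ((n:ℝ)+1) * Real.Gamma ((n:ℝ)+1) := by
    rw [Real.Gamma_add_one (by positivity)]
  push_cast
  rw [h2, h3]
  have := (Gamma_nat_pos n).ne'
  field_simp

lemma qq_W (n : ℕ) : W n * ((2*(n:ℝ)+1) * qq n) = π := by
  induction n with
  | zero => simp [W, qq_zero]
  | succ n ih =>
    rw [W_succ, qq_succ]
    push_cast
    have h1 : (2*(n:ℝ)+1) ≠ 0 := by positivity
    have h2 : (2*(n:ℝ)+2) ≠ 0 := by positivity
    have h3 : (2*(n:ℝ)+3) ≠ 0 := by positivity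
    rw [← ih]
    field_simp
    ring

noncomputable def SS (n : ℕ) : ℝ := W n * ((8*n+4)/(4*n+1))
noncomputable def TT (n : ℕ) : ℝ := W n * ((4*n-1)*(2*n+1)/(4*n^2))

lemma SS_antitone : Antitone SS := by
  apply antitone_nat_of_succ_le
  intro n
  unfold SS
  rw [W_succ]
  have hW := W_pos n
  have h1 : (0:ℝ) < 2*n+1 := by positivity
  have h3 : (0:ℝ) < 2*n+3 := by positivity
  have h4 : (0:ℝ) < 4*n+1 := by positivity
  have h5 : (0:ℝ) < 4*n+5 := by positivity
  rw [div_mul_div_comm, mul_assoc, div_mul_div_comm]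
  push_cast
  apply mul_le_mul_of_nonneg_left _ hW.le
  rw [div_le_div_iff₀ (by positivity) (by positivity)]
  nlinarith [sq_nonneg ((n:ℝ)+1)]

lemma TT_monotone : Monotone TT := by
  apply monotone_nat_of_le_succ
  intro n
  unfold TT
  rw [W_succ]
  have hW := W_pos n
  rcases Nat.eq_zero_or_pos n with rfl | hn
  · norm_num [W]
    try positivity
  have hn1 : (1:ℝ) ≤ n := by exact_mod_cast hn
  have h1 : (0:ℝ) < 2*n+1 := by positivity
  have h3 : (0:ℝ) < 2*n+3 := by positivity
  have h2 : (0:ℝ) < 4*n-1 := by nlinarith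
  rw [div_mul_div_comm, mul_assoc, div_mul_div_comm]
  push_cast
  apply mul_le_mul_of_nonneg_left _ hW.le
  rw [div_le_div_iff₀ (by positivity) (by positivity)]
  nlinarith [sq_nonneg ((n:ℝ)+1), sq_nonneg ((n:ℝ)*(n+1))]

lemma h0_inv : Tendsto (fun n : ℕ => ((n:ℝ))⁻¹) atTop (nhds 0) :=
  tendsto_inv_atTop_zero.comp tendsto_natCast_atTop_atTop

lemma SS_tendsto : Tendsto SS atTop (nhds π) := by
  have key : Tendsto (fun n : ℕ => (8 + 4*((n:ℝ))⁻¹)/(4 + 1*((n:ℝ))⁻¹)) atTop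
      (nhds ((8 + 4*0)/(4 + 1*0))) :=
    Tendsto.div (tendsto_const_nhds.add (h0_inv.const_mul 4))
      (tendsto_const_nhds.add (h0_inv.const_mul 1)) (by norm_num)
  have hF : Tendsto (fun n : ℕ => (8*(n:ℝ)+4)/(4*(n:ℝ)+1)) atTop (nhds 2) := by
    have h2 : Tendsto (fun n : ℕ => (8 + 4*((n:ℝ))⁻¹)/(4 + 1*((n:ℝ))⁻¹)) atTop (nhds 2) := by
      convert key using 2; norm_num
    apply Tendsto.congr' _ h2
    filter_upwards [eventually_ge_atTop 1] with n hn
    have hn' : (0:ℝ) < n := by exact_mod_cast hn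
    field_simp
    try ring
  have h2 := tendsto_W_nhds_pi_div_two.mul hF
  have : π/2*2 = π := by ring
  rw [this] at h2
  exact h2

lemma TT_tendsto : Tendsto TT atTop (nhds π) := by
  have key : Tendsto (fun n : ℕ => (4 - 1*((n:ℝ))⁻¹)*(2 + 1*((n:ℝ))⁻¹)/4) atTop
      (nhds ((4 - 1*0)*(2 + 1*0)/4)) :=
    ((tendsto_const_nhds.sub (h0_inv.const_mul 1)).mul
      (tendsto_const_nhds.add (h0_inv.const_mul 1))).div_const 4
  have hF : Tendsto (fun n : ℕ => (4*(n:ℝ)-1)*(2*(n:ℝ)+1)/(4*(n:ℝ)^2)) atTop (nhds 2) := by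
    have h2 : Tendsto (fun n : ℕ => (4 - 1*((n:ℝ))⁻¹)*(2 + 1*((n:ℝ))⁻¹)/4) atTop (nhds 2) := by
      convert key using 2; norm_num
    apply Tendsto.congr' _ h2
    filter_upwards [eventually_ge_atTop 1] with n hn
    have hn' : (0:ℝ) < n := by exact_mod_cast hn
    field_simp
    try ring
    try exact Or.inl trivial
  have h2 := tendsto_W_nhds_pi_div_two.mul hF
  have heq : π/2*2 = π := by ring
  rw [heq] at h2
  exact h2

lemma qq_le (n : ℕ) : qq n ≤ 4/(4*(n:ℝ)+1) := by
  have hS : π ≤ SS n := SS_antitone.le_of_tendsto SS_tendsto n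
  rw [← qq_W n] at hS
  unfold SS at hS
  have hW := W_pos n
  have h4 : (0:ℝ) < 4*n+1 := by positivity
  have h1 : (0:ℝ) < 2*n+1 := by positivity
  have key : (2*(n:ℝ)+1) * qq n ≤ (8*n+4)/(4*n+1) := le_of_mul_le_mul_left hS hW
  rw [le_div_iff₀ h4] at key
  rw [le_div_iff₀ h4]
  nlinarith [key, qq_pos n]

lemma qq_ge (n : ℕ) (hn : 1 ≤ n) : (4*(n:ℝ)-1)/(4*(n:ℝ)^2) ≤ qq n := by
  have hT : TT n ≤ π := TT_monotone.ge_of_tendsto TT_tendsto n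
  rw [← qq_W n] at hT
  unfold TT at hT
  have hW := W_pos n
  have hn' : (1:ℝ) ≤ n := by exact_mod_cast hn
  have h1 : (0:ℝ) < 2*n+1 := by positivity
  have h2 : (0:ℝ) < 4*(n:ℝ)^2 := by positivity
  have key : (4*(n:ℝ)-1)*(2*n+1)/(4*n^2) ≤ (2*(n:ℝ)+1) * qq n := le_of_mul_le_mul_left hT hW
  rw [div_le_iff₀ h2] at key
  rw [div_le_iff₀ h2]
  nlinarith [key, qq_pos n]

noncomputable def A (p : ℕ) : ℝ :=
  2 * (Real.Gamma (((p:ℝ)+1)/2) / Real.Gamma ((p:ℝ)/2))^2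

lemma A_bounds (p : ℕ) (hp : 2 ≤ p) :
    ((p:ℝ) - 1/2 ≤ A p ∧ A p ≤ (p:ℝ) - 1/2 + 1/(4*(p:ℝ)-6)) := by
  rcases Nat.even_or_odd p with ⟨n, rfl⟩ | ⟨n, rfl⟩
  · -- p = n + n
    have hn : 1 ≤ n := by omega
    have hn' : (1:ℝ) ≤ n := by exact_mod_cast hn
    have hn0 : (0:ℝ) < n := by linarith
    have e1 : ((n+n:ℕ):ℝ) = 2*(n:ℝ) := by push_cast; ring
    have e2 : (((n+n:ℕ):ℝ)+1)/2 = (n:ℝ) + 1/2 := by rw [e1]; ring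
    have e3 : ((n+n:ℕ):ℝ)/2 = (n:ℝ) := by rw [e1]; ring
    have hGn1 : Real.Gamma ((n:ℝ)+1) = n * Real.Gamma n := Real.Gamma_add_one hn0.ne'
    have hGn : 0 < Real.Gamma (n:ℝ) := Real.Gamma_pos_of_pos hn0
    have hA : A (n+n) = 2*(n:ℝ)^2 * qq n := by
      unfold A qq
      rw [e2, e3, hGn1, div_pow]
      field_simp
    have hle := qq_le n
    have hge := qq_ge n hn
    constructor
    · rw [hA, e1]
      have : 2*(n:ℝ)^2 * ((4*n-1)/(4*n^2)) = 2*n - 1/2 := by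
        field_simp; ring
      nlinarith [hge]
    · rw [hA, e1]
      have h46 : (0:ℝ) < 4*(2*(n:ℝ))-6 := by nlinarith
      have h41 : (0:ℝ) < 4*(n:ℝ)+1 := by positivity
      have hstep : 2*(n:ℝ)^2 * qq n ≤ 2*n^2 * (4/(4*n+1)) := by nlinarith [hle]
      have key : (1:ℝ)/2 ≤ 1/(4*(2*(n:ℝ))-6) * (4*n+1) := by
        rw [div_mul_eq_mul_div, le_div_iff₀ h46]
        linarith
      have h2 : 2*(n:ℝ)^2 * (4/(4*n+1)) ≤ 2*n - 1/2 + 1/(4*(2*n)-6) := by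
        rw [show 2*(n:ℝ)^2*(4/(4*n+1)) = 8*n^2/(4*n+1) from by ring, div_le_iff₀ h41]
        nlinarith [key]
      linarith
  · -- p = 2n+1
    have hn : 1 ≤ n := by omega
    have hn' : (1:ℝ) ≤ n := by exact_mod_cast hn
    have hn0 : (0:ℝ) < n := by linarith
    have e1 : ((2*n+1:ℕ):ℝ) = 2*(n:ℝ)+1 := by push_cast; ring
    have e2 : (((2*n+1:ℕ):ℝ)+1)/2 = (n:ℝ) + 1 := by rw [e1]; ring
    have e3 : ((2*n+1:ℕ):ℝ)/2 = (n:ℝ) + 1/2 := by rw [e1]; ring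
    have hGh : 0 < Real.Gamma ((n:ℝ)+1/2) := Gamma_half_pos n
    have hG1 : 0 < Real.Gamma ((n:ℝ)+1) := Gamma_nat_pos n
    have hA : A (2*n+1) = 2 / qq n := by
      unfold A qq
      rw [e2, e3, div_pow]
      field_simp
    have hle := qq_le n
    have hge := qq_ge n hn
    have hq := qq_pos n
    have h41 : (0:ℝ) < 4*(n:ℝ)+1 := by positivity
    have h82 : (0:ℝ) < 8*(n:ℝ)-2 := by nlinarith
    constructor
    · rw [hA, e1]
      rw [le_div_iff₀ hq]
      have hh : qq n * (4*(n:ℝ)+1) ≤ 4 := by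
        rw [le_div_iff₀ h41] at hle; linarith
      nlinarith [hh]
    · rw [hA, e1]
      have h46 : 4*(2*(n:ℝ)+1)-6 = 8*(n:ℝ)-2 := by ring
      rw [h46]
      have hrhs : (2*(n:ℝ)+1-1/2+1/(8*n-2)) = (16*n^2)/(8*n-2) := by
        rw [eq_div_iff h82.ne', add_mul, one_div_mul_cancel h82.ne']; ring
      rw [hrhs, div_le_div_iff₀ hq h82]
      have hh : 4*(n:ℝ)-1 ≤ qq n * (4*n^2) := by
        rw [div_le_iff₀ (by positivity : (0:ℝ) < 4*(n:ℝ)^2)] at hge; linarith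
      nlinarith [hh]

lemma expr_eq (p : ℕ) (hp : 2 ≤ p) :
    (((p:ℝ) - 1) * Real.Gamma (((p:ℝ) - 1) / 2) /
      (Real.sqrt 2 * Real.Gamma ((p:ℝ) / 2))) ^ 2 = A p := by
  have hp' : (2:ℝ) ≤ p := by exact_mod_cast hp
  have hx : ((p:ℝ)-1)/2 ≠ 0 := ne_of_gt (by nlinarith)
  have hG : Real.Gamma (((p:ℝ)+1)/2) = (((p:ℝ)-1)/2) * Real.Gamma (((p:ℝ)-1)/2) := by
    rw [show ((p:ℝ)+1)/2 = ((p:ℝ)-1)/2 + 1 from by ring, Real.Gamma_add_one hx]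
  have hnum : ((p:ℝ) - 1) * Real.Gamma (((p:ℝ) - 1) / 2) = 2 * Real.Gamma (((p:ℝ)+1)/2) := by
    rw [hG]; ring
  unfold A
  rw [hnum]
  have hGp : 0 < Real.Gamma ((p:ℝ)/2) := Real.Gamma_pos_of_pos (by positivity)
  rw [div_pow, mul_pow, mul_pow, Real.sq_sqrt (by norm_num : (0:ℝ) ≤ 2)]
  rw [div_pow]
  field_simp

theorem stmt_4 :
    Tendsto (fun p : ℕ =>
        (p : ℝ) - (((p : ℝ) - 1) * Real.Gamma (((p : ℝ) - 1) / 2) /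
            (Real.sqrt 2 * Real.Gamma ((p : ℝ) / 2))) ^ 2)
      atTop (nhds (1 / 2)) := by
  have t0 : Tendsto (fun p : ℕ => 4*(p:ℝ)-6) atTop atTop := by
    apply Tendsto.atTop_add _ tendsto_const_nhds
    exact Tendsto.const_mul_atTop (by norm_num) tendsto_natCast_atTop_atTop
  have t1 : Tendsto (fun p : ℕ => 1/(4*(p:ℝ)-6)) atTop (nhds 0) := by
    simp only [one_div]; exact t0.inv_tendsto_atTop
  have tg : Tendsto (fun p : ℕ => 1/2 - 1/(4*(p:ℝ)-6)) atTop (nhds (1/2)) := by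
    have := (tendsto_const_nhds (x := (1/2:ℝ)) (f := atTop (α := ℕ))).sub t1
    simpa using this
  apply tendsto_of_tendsto_of_tendsto_of_le_of_le' tg tendsto_const_nhds
  · filter_upwards [eventually_ge_atTop 2] with p hp
    have h := (A_bounds p hp).2
    rw [expr_eq p hp]
    linarith
  · filter_upwards [eventually_ge_atTop 2] with p hp
    have h := (A_bounds p hp).1
    rw [expr_eq p hp]
    linarith
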